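/- (Dimension 48 case of the main theorem.) Define P₄₈(z) = (1 − z)⁶ − (45/8)(1 − z)³ z² + (3915/2048) z⁴. For every real y > 0, P₄₈(z(y)) ≥ P₄₈(1/4) > 0; consequently the secrecy function Ξ(y) = P₄₈(z(y))^{-1} of the extremal even unimodular lattice in dimension 48 satisfies Ξ(y) ≤ Ξ(1) = P₄₈(1/4)^{-1}. -/

import Mathlib

/-- Jacobi theta constant θ₂ on the imaginary axis. -/
noncomputable def theta2 (y : ℝ) : ℝ := ∑' n : ℤ, Real.exp (-Real.pi * y * (n + 1/2)^2)

/-- Jacobi theta constant θ₃ on the imaginary axis. -/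
noncomputable def theta3 (y : ℝ) : ℝ := ∑' n : ℤ, Real.exp (-Real.pi * y * n^2)

/-- Jacobi theta constant θ₄ on the imaginary axis. -/
noncomputable def theta4 (y : ℝ) : ℝ := ∑' n : ℤ, (-1 : ℝ)^n * Real.exp (-Real.pi * y * n^2)

/-- The function z(y) = θ₂(y)⁴θ₄(y)⁴/θ₃(y)⁸. -/
noncomputable def zfun (y : ℝ) : ℝ := theta2 y ^ 4 * theta4 y ^ 4 / theta3 y ^ 8

/-- Denominator polynomial of the secrecy function of the extremal even
unimodular lattice in dimension 48. -/
noncomputable def P48 (z : ℝ) : ℝ := (1 - z) ^ 6 - 45 / 8 * (1 - z) ^ 3 * z ^ 2 + 3915 / 2048 * z ^ 4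

open Real

/-- Summability of shifted Gaussian sums over ℤ. -/
lemma summable_sh {y : ℝ} (hy : 0 < y) (c : ℝ) :
    Summable fun n : ℤ ↦ Real.exp (-π * y * ((n : ℝ) + c)^2) := by
  have h : Summable fun n : ℤ ↦ jacobiTheta₂_term n (((c*y : ℝ) : ℂ) * Complex.I) (((y:ℝ):ℂ) * Complex.I) := by
    refine (summable_jacobiTheta₂_term_iff _ _).2 ?_
    simpa using hy
  have h2 : Summable fun n : ℤ ↦
      ‖jacobiTheta₂_term n (((c*y : ℝ) : ℂ) * Complex.I) (((y:ℝ):ℂ) * Complex.I)‖ :=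
    summable_norm_iff.2 h
  simp only [norm_jacobiTheta₂_term, Complex.mul_I_im, Complex.ofReal_re] at h2
  refine (h2.mul_left (Real.exp (-π * y * c^2))).congr (fun n ↦ ?_)
  rw [← Real.exp_add]
  congr 1
  ring

lemma summable_t3 {y : ℝ} (hy : 0 < y) :
    Summable fun n : ℤ ↦ Real.exp (-π * y * (n : ℝ)^2) := by
  have := summable_sh hy 0
  simpa using this

lemma summable_t4 {y : ℝ} (hy : 0 < y) :
    Summable fun n : ℤ ↦ (-1 : ℝ)^n * Real.exp (-π * y * (n : ℝ)^2) := by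
  refine Summable.of_norm ?_
  have : ∀ n : ℤ, ‖(-1 : ℝ)^n * Real.exp (-π * y * (n : ℝ)^2)‖
      = Real.exp (-π * y * (n : ℝ)^2) := by
    intro n
    rw [Real.norm_eq_abs, abs_mul, abs_neg_one_zpow, one_mul, Real.abs_exp]
  simpa only [this] using summable_t3 hy

/-- Product of two tsums over ℤ as a tsum over ℤ × ℤ. -/
lemma tsum_mul_tsum_int {f g : ℤ → ℝ} (hf : Summable f) (hg : Summable g) :
    (∑' n, f n) * (∑' n, g n) = ∑' p : ℤ × ℤ, f p.1 * g p.2 := by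
  have hfg : Summable fun p : ℤ × ℤ ↦ f p.1 * g p.2 :=
    Summable.of_norm (Summable.mul_norm (summable_norm_iff.2 hf) (summable_norm_iff.2 hg))
  rw [Summable.tsum_prod' hfg (fun b ↦ hg.mul_left (f b))]
  simp_rw [tsum_mul_left]
  rw [tsum_mul_right]

/-- Splitting a sum over ℤ² according to the parity of the coordinate sum,
via the change of variables (a,b) ↦ (a+b, a−b) resp. (a+b+1, a−b). -/
lemma tsum_int_prod_split (F : ℤ × ℤ → ℝ) (hF : Summable F) :
    ∑' p : ℤ × ℤ, F p
      = (∑' p : ℤ × ℤ, F (p.1 + p.2, p.1 - p.2))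
        + ∑' p : ℤ × ℤ, F (p.1 + p.2 + 1, p.1 - p.2) := by
  set s : Set (ℤ × ℤ) := {p | (p.1 + p.2) % 2 = 0} with hs
  have mem1 : ∀ p : ℤ × ℤ, ((p.1 + p.2, p.1 - p.2) : ℤ × ℤ) ∈ s := by
    intro p
    simp only [hs, Set.mem_setOf_eq]
    omega
  have mem2 : ∀ p : ℤ × ℤ, ((p.1 + p.2 + 1, p.1 - p.2) : ℤ × ℤ) ∈ sᶜ := by
    intro p
    simp only [hs, Set.mem_compl_iff, Set.mem_setOf_eq]
    omega
  have hbij1 : Function.Bijective (fun p : ℤ × ℤ ↦ (⟨_, mem1 p⟩ : s)) := by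
    constructor
    · intro p q h
      simp only [Subtype.mk.injEq, Prod.mk.injEq] at h
      obtain ⟨h1, h2⟩ := h
      rw [Prod.ext_iff]
      omega
    · rintro ⟨⟨u, v⟩, hu⟩
      simp only [hs, Set.mem_setOf_eq] at hu
      refine ⟨((u+v)/2, (u-v)/2), Subtype.ext ?_⟩
      show ((u+v)/2 + (u-v)/2, (u+v)/2 - (u-v)/2) = (u, v)
      rw [Prod.mk.injEq]
      omega
  have hbij2 : Function.Bijective (fun p : ℤ × ℤ ↦ (⟨_, mem2 p⟩ : ↥sᶜ)) := by
    constructor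
    · intro p q h
      simp only [Subtype.mk.injEq, Prod.mk.injEq] at h
      obtain ⟨h1, h2⟩ := h
      rw [Prod.ext_iff]
      omega
    · rintro ⟨⟨u, v⟩, hu⟩
      simp only [hs, Set.mem_compl_iff, Set.mem_setOf_eq] at hu
      refine ⟨((u+v-1)/2, (u-v-1)/2), Subtype.ext ?_⟩
      show ((u+v-1)/2 + (u-v-1)/2 + 1, (u+v-1)/2 - (u-v-1)/2) = (u, v)
      rw [Prod.mk.injEq]
      omega
  have h1 : Summable (F ∘ (Subtype.val) : s → ℝ) := hF.subtype s
  have h2 : Summable (F ∘ (Subtype.val) : ↥sᶜ → ℝ) := hF.subtype sᶜ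
  calc ∑' p : ℤ × ℤ, F p
      = (∑' x : s, (F ∘ Subtype.val) x) + ∑' x : ↥sᶜ, (F ∘ Subtype.val) x :=
        (h1.hasSum.add_compl h2.hasSum).tsum_eq
    _ = _ := by
        rw [← Equiv.tsum_eq (Equiv.ofBijective _ hbij1) (F ∘ Subtype.val),
          ← Equiv.tsum_eq (Equiv.ofBijective _ hbij2) (F ∘ Subtype.val)]
        exact congrArg₂ (· + ·) (tsum_congr fun p ↦ rfl) (tsum_congr fun p ↦ rfl)

set_option maxHeartbeats 1000000 in
lemma theta3_sq {y : ℝ} (hy : 0 < y) :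
    theta3 y ^ 2 = theta3 (2*y) ^ 2 + theta2 (2*y) ^ 2 := by
  have hf := summable_t3 hy
  have h2 : (0:ℝ) < 2*y := by linarith
  have hprod : Summable fun p : ℤ × ℤ ↦
      Real.exp (-π*y*(p.1:ℝ)^2) * Real.exp (-π*y*(p.2:ℝ)^2) :=
    hf.mul_of_nonneg hf (fun n ↦ (Real.exp_pos _).le) (fun n ↦ (Real.exp_pos _).le)
  rw [theta3, sq, tsum_mul_tsum_int hf hf,
    tsum_int_prod_split (fun p : ℤ × ℤ ↦ Real.exp (-π*y*(p.1:ℝ)^2) * Real.exp (-π*y*(p.2:ℝ)^2)) hprod]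
  congr 1
  · rw [theta3, sq, tsum_mul_tsum_int (summable_t3 h2) (summable_t3 h2)]
    refine tsum_congr (fun p ↦ ?_)
    rw [← Real.exp_add, ← Real.exp_add]
    congr 1
    push_cast
    ring
  · rw [theta2, sq, tsum_mul_tsum_int (summable_sh h2 (1/2)) (summable_sh h2 (1/2))]
    refine tsum_congr (fun p ↦ ?_)
    rw [← Real.exp_add, ← Real.exp_add]
    congr 1
    push_cast
    ring

set_option maxHeartbeats 1000000 in
lemma theta4_sq {y : ℝ} (hy : 0 < y) :
    theta4 y ^ 2 = theta3 (2*y) ^ 2 - theta2 (2*y) ^ 2 := by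
  have hf := summable_t4 hy
  have h2 : (0:ℝ) < 2*y := by linarith
  have hE := summable_t3 hy
  have hEprod : Summable fun p : ℤ × ℤ ↦
      Real.exp (-π*y*(p.1:ℝ)^2) * Real.exp (-π*y*(p.2:ℝ)^2) :=
    hE.mul_of_nonneg hE (fun n ↦ (Real.exp_pos _).le) (fun n ↦ (Real.exp_pos _).le)
  have hprod : Summable fun p : ℤ × ℤ ↦
      ((-1:ℝ)^p.1 * Real.exp (-π*y*(p.1:ℝ)^2)) * ((-1:ℝ)^p.2 * Real.exp (-π*y*(p.2:ℝ)^2)) := by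
    apply Summable.of_norm
    refine hEprod.congr (fun p ↦ ?_)
    rw [Real.norm_eq_abs, abs_mul, abs_mul, abs_mul, abs_neg_one_zpow, abs_neg_one_zpow,
      Real.abs_exp, Real.abs_exp, one_mul, one_mul]
  rw [theta4, sq, tsum_mul_tsum_int hf hf, tsum_int_prod_split
    (fun p : ℤ × ℤ ↦ ((-1:ℝ)^p.1 * Real.exp (-π*y*(p.1:ℝ)^2))
      * ((-1:ℝ)^p.2 * Real.exp (-π*y*(p.2:ℝ)^2))) hprod]
  have hb1 : (∑' p : ℤ × ℤ, ((-1:ℝ)^(p.1+p.2) * Real.exp (-π*y*((p.1+p.2 : ℤ):ℝ)^2))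
      * ((-1:ℝ)^(p.1-p.2) * Real.exp (-π*y*((p.1-p.2 : ℤ):ℝ)^2))) = theta3 (2*y) ^ 2 := by
    rw [theta3, sq, tsum_mul_tsum_int (summable_t3 h2) (summable_t3 h2)]
    refine tsum_congr (fun p ↦ ?_)
    have hsgn : ((-1:ℝ))^(p.1+p.2) * (-1:ℝ)^(p.1-p.2) = 1 := by
      rw [← zpow_add₀ (by norm_num : (-1:ℝ) ≠ 0)]
      rw [show p.1 + p.2 + (p.1 - p.2) = 2 * p.1 by ring, zpow_mul]
      norm_num
    calc ((-1:ℝ)^(p.1+p.2) * Real.exp (-π*y*((p.1+p.2 : ℤ):ℝ)^2))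
          * ((-1:ℝ)^(p.1-p.2) * Real.exp (-π*y*((p.1-p.2 : ℤ):ℝ)^2))
        = ((-1:ℝ)^(p.1+p.2) * (-1:ℝ)^(p.1-p.2))
          * (Real.exp (-π*y*((p.1+p.2 : ℤ):ℝ)^2) * Real.exp (-π*y*((p.1-p.2 : ℤ):ℝ)^2)) := by
          ring
      _ = Real.exp (-π*y*((p.1+p.2 : ℤ):ℝ)^2) * Real.exp (-π*y*((p.1-p.2 : ℤ):ℝ)^2) := by
          rw [hsgn, one_mul]
      _ = Real.exp (-π*(2*y)*(p.1:ℝ)^2) * Real.exp (-π*(2*y)*(p.2:ℝ)^2) := by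
          rw [← Real.exp_add, ← Real.exp_add]
          congr 1
          push_cast
          ring
  have hb2 : (∑' p : ℤ × ℤ, ((-1:ℝ)^(p.1+p.2+1) * Real.exp (-π*y*((p.1+p.2+1 : ℤ):ℝ)^2))
      * ((-1:ℝ)^(p.1-p.2) * Real.exp (-π*y*((p.1-p.2 : ℤ):ℝ)^2))) = -(theta2 (2*y) ^ 2) := by
    have : (theta2 (2*y) ^ 2) = ∑' p : ℤ × ℤ,
        Real.exp (-π*(2*y)*((p.1:ℝ)+1/2)^2) * Real.exp (-π*(2*y)*((p.2:ℝ)+1/2)^2) := by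
      rw [theta2, sq, tsum_mul_tsum_int (summable_sh h2 (1/2)) (summable_sh h2 (1/2))]
    rw [this, ← tsum_neg]
    refine tsum_congr (fun p ↦ ?_)
    have hsgn : ((-1:ℝ))^(p.1+p.2+1) * (-1:ℝ)^(p.1-p.2) = -1 := by
      rw [← zpow_add₀ (by norm_num : (-1:ℝ) ≠ 0)]
      rw [show p.1 + p.2 + 1 + (p.1 - p.2) = 2 * p.1 + 1 by ring,
        zpow_add₀ (by norm_num : (-1:ℝ) ≠ 0), zpow_mul]
      norm_num
    calc ((-1:ℝ)^(p.1+p.2+1) * Real.exp (-π*y*((p.1+p.2+1 : ℤ):ℝ)^2))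
          * ((-1:ℝ)^(p.1-p.2) * Real.exp (-π*y*((p.1-p.2 : ℤ):ℝ)^2))
        = ((-1:ℝ)^(p.1+p.2+1) * (-1:ℝ)^(p.1-p.2))
          * (Real.exp (-π*y*((p.1+p.2+1 : ℤ):ℝ)^2) * Real.exp (-π*y*((p.1-p.2 : ℤ):ℝ)^2)) := by
          ring
      _ = -(Real.exp (-π*y*((p.1+p.2+1 : ℤ):ℝ)^2) * Real.exp (-π*y*((p.1-p.2 : ℤ):ℝ)^2)) := by
          rw [hsgn]; ring
      _ = -(Real.exp (-π*(2*y)*((p.1:ℝ)+1/2)^2) * Real.exp (-π*(2*y)*((p.2:ℝ)+1/2)^2)) := by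
          rw [← Real.exp_add, ← Real.exp_add]
          congr 2
          push_cast
          ring
  rw [hb1, hb2]
  ring

lemma shift_one {t : ℝ} (ht : 0 < t) :
    (∑' n : ℤ, Real.exp (-π*t*((n:ℝ)+1)^2)) = theta3 t := by
  rw [theta3, ← Equiv.tsum_eq (Equiv.addRight (1:ℤ)) (fun n : ℤ ↦ Real.exp (-π*t*(n:ℝ)^2))]
  refine tsum_congr (fun n ↦ ?_)
  simp only [Equiv.coe_addRight]
  congr 1
  push_cast
  ring

set_option maxHeartbeats 1000000 in
lemma theta2_sq {y : ℝ} (hy : 0 < y) :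
    theta2 y ^ 2 = 2 * (theta2 (2*y) * theta3 (2*y)) := by
  have hf := summable_sh hy (1/2)
  have h2 : (0:ℝ) < 2*y := by linarith
  have hprod : Summable fun p : ℤ × ℤ ↦
      Real.exp (-π*y*((p.1:ℝ)+1/2)^2) * Real.exp (-π*y*((p.2:ℝ)+1/2)^2) :=
    hf.mul_of_nonneg hf (fun n ↦ (Real.exp_pos _).le) (fun n ↦ (Real.exp_pos _).le)
  rw [theta2, sq, tsum_mul_tsum_int hf hf, tsum_int_prod_split
    (fun p : ℤ × ℤ ↦ Real.exp (-π*y*((p.1:ℝ)+1/2)^2) * Real.exp (-π*y*((p.2:ℝ)+1/2)^2)) hprod]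
  have hb1 : (∑' p : ℤ × ℤ, Real.exp (-π*y*(((p.1+p.2 : ℤ):ℝ)+1/2)^2)
      * Real.exp (-π*y*(((p.1-p.2 : ℤ):ℝ)+1/2)^2)) = theta2 (2*y) * theta3 (2*y) := by
    rw [theta2, theta3, tsum_mul_tsum_int (summable_sh h2 (1/2)) (summable_t3 h2)]
    refine tsum_congr (fun p ↦ ?_)
    rw [← Real.exp_add, ← Real.exp_add]
    congr 1
    push_cast
    ring
  have hb2 : (∑' p : ℤ × ℤ, Real.exp (-π*y*(((p.1+p.2+1 : ℤ):ℝ)+1/2)^2)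
      * Real.exp (-π*y*(((p.1-p.2 : ℤ):ℝ)+1/2)^2)) = theta3 (2*y) * theta2 (2*y) := by
    rw [theta2, ← shift_one h2, tsum_mul_tsum_int (summable_sh h2 1) (summable_sh h2 (1/2))]
    refine tsum_congr (fun p ↦ ?_)
    rw [← Real.exp_add, ← Real.exp_add]
    congr 1
    push_cast
    ring
  rw [hb1, hb2]
  ring

lemma theta3_pos {y : ℝ} (hy : 0 < y) : 0 < theta3 y := by
  rw [theta3]
  exact Summable.tsum_pos (summable_t3 hy) (fun n ↦ (Real.exp_pos _).le) 0 (Real.exp_pos _)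

lemma theta2_pos {y : ℝ} (hy : 0 < y) : 0 < theta2 y := by
  rw [theta2]
  exact Summable.tsum_pos (summable_sh hy (1/2)) (fun n ↦ (Real.exp_pos _).le) 0 (Real.exp_pos _)

/-- θ₄(1) = θ₂(1), by Poisson summation. -/
lemma theta4_one : theta4 1 = theta2 1 := by
  have key := Complex.tsum_exp_neg_quadratic (a := 1) (by norm_num) (Complex.I/2)
  have hL : (∑' n : ℤ, Complex.exp (-(π:ℂ) * 1 * (n:ℂ)^2 + 2 * π * (Complex.I/2) * (n:ℂ)))
      = ((theta4 1 : ℝ) : ℂ) := by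
    rw [theta4, Complex.ofReal_tsum]
    refine tsum_congr (fun n ↦ ?_)
    rw [show -(π:ℂ) * 1 * (n:ℂ)^2 + 2 * π * (Complex.I/2) * (n:ℂ)
        = (n:ℂ) * ((π:ℝ) * Complex.I) + ((-π * 1 * (n:ℝ)^2 : ℝ) : ℂ) by push_cast; ring]
    rw [Complex.exp_add, Complex.exp_int_mul, Complex.exp_pi_mul_I, ← Complex.ofReal_exp]
    push_cast
    ring
  have hR : (∑' n : ℤ, Complex.exp (-(π:ℂ) / 1 * ((n:ℂ) + Complex.I * (Complex.I/2))^2))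
      = ((theta2 1 : ℝ) : ℂ) := by
    rw [theta2, Complex.ofReal_tsum,
      ← Equiv.tsum_eq (Equiv.neg ℤ)
        (fun n : ℤ ↦ ((Real.exp (-π * 1 * ((n:ℝ) + 1/2)^2) : ℝ) : ℂ))]
    refine tsum_congr (fun n ↦ ?_)
    simp only [Equiv.neg_apply]
    rw [Complex.ofReal_exp]
    congr 1
    rw [show Complex.I * (Complex.I/2) = -(1/2 : ℂ) by
      rw [show Complex.I * (Complex.I/2) = Complex.I * Complex.I / 2 by ring, Complex.I_mul_I]
      norm_num]
    push_cast
    ring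
  rw [hL, hR] at key
  have : ((theta4 1 : ℝ) : ℂ) = ((theta2 1 : ℝ) : ℂ) := by
    rw [key, Complex.one_cpow]
    norm_num
  exact_mod_cast this

lemma zfun_nonneg (y : ℝ) : 0 ≤ zfun y := by
  rw [zfun]
  positivity

lemma zfun_le {y : ℝ} (hy : 0 < y) : zfun y ≤ 1/4 := by
  have h2 : (0:ℝ) < 2*y := by linarith
  have hA := theta3_sq hy
  have hB := theta4_sq hy
  have hC := theta2_sq hy
  have h3 : 0 < theta3 y := theta3_pos hy
  set a := theta2 (2*y)
  set b := theta3 (2*y)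
  rw [zfun, div_le_iff₀ (by positivity)]
  have e1 : theta2 y^4 = (2*(a*b))^2 := by
    rw [show theta2 y^4 = (theta2 y^2)^2 by ring, hC]
  have e2 : theta4 y^4 = (b^2-a^2)^2 := by
    rw [show theta4 y^4 = (theta4 y^2)^2 by ring, hB]
  have e3 : theta3 y^8 = (b^2+a^2)^4 := by
    rw [show theta3 y^8 = (theta3 y^2)^4 by ring, hA]
  rw [e1, e2, e3]
  nlinarith [sq_nonneg ((a^2+2*a*b-b^2)*(a^2-2*a*b-b^2)), sq_nonneg a, sq_nonneg b]

lemma zfun_one : zfun 1 = 1/4 := by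
  have hA := theta3_sq one_pos
  have hB := theta4_sq one_pos
  have hC := theta2_sq one_pos
  rw [show (2:ℝ)*1 = 2 by norm_num] at hA hB hC
  have hEq := theta4_one
  set a := theta2 2
  set b := theta3 2
  have hapos : 0 < a := theta2_pos (by norm_num)
  have hbpos : 0 < b := theta3_pos (by norm_num)
  have h3 : (0:ℝ) < theta3 1 := theta3_pos one_pos
  have e4 : 2*(a*b) = b^2 - a^2 := by rw [← hC, ← hB, hEq]
  rw [zfun, div_eq_iff (by positivity)]
  have h5 : (b^2+a^2)^2 = 8*(a*b)^2 := by linear_combination (a^2 - b^2 - 2*(a*b)) * e4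
  calc theta2 1^4 * theta4 1^4 = (theta2 1^2)^2 * (theta4 1^2)^2 := by ring
    _ = (2*(a*b))^2 * (2*(a*b))^2 := by rw [hC, hB, ← e4]
    _ = 1/4 * ((8*(a*b)^2)^2) := by ring
    _ = 1/4 * (((b^2+a^2))^2)^2 := by rw [h5]
    _ = 1/4 * ((theta3 1^2)^2)^2 := by rw [hA]
    _ = 1/4 * theta3 1^8 := by ring

theorem secrecy_dim48 :
    (∀ y : ℝ, 0 < y → P48 (1 / 4) ≤ P48 (zfun y)) ∧ 0 < P48 (1 / 4) ∧
      (∀ y : ℝ, 0 < y → (P48 (zfun y))⁻¹ ≤ (P48 (zfun 1))⁻¹) ∧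
      (P48 (zfun 1))⁻¹ = (P48 (1 / 4))⁻¹ := by
  have hP : ∀ z : ℝ, 0 ≤ z → z ≤ 1/4 → P48 (1/4) ≤ P48 z := by
    intro z h0 h1
    rw [P48, P48]
    have h14 : (0:ℝ) ≤ 1/4 - z := by linarith
    have hb1 : (0:ℝ) ≤ 504821/131072 - 281611/32768*z := by linarith
    have hb2 : (0:ℝ) ≤ 25589/8192 - 11/2048*z + 1/8*z^2 - z^3 := by
      nlinarith [mul_nonneg h0 h0, mul_nonneg (mul_nonneg h0 h0) h0, sq_nonneg z,
        mul_nonneg (mul_nonneg h14 h14) h14]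
    nlinarith [mul_nonneg h14 hb1, mul_nonneg (mul_nonneg h14 (sq_nonneg z)) hb2]
  have hPpos : 0 < P48 (1/4) := by rw [P48]; norm_num
  have hmain : ∀ y : ℝ, 0 < y → P48 (1/4) ≤ P48 (zfun y) :=
    fun y hy ↦ hP _ (zfun_nonneg y) (zfun_le hy)
  refine ⟨hmain, hPpos, fun y hy ↦ ?_, by rw [zfun_one]⟩
  rw [zfun_one]
  exact inv_anti₀ hPpos (hmain y hy)
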